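/- Let p be a prime with p ≡ 1 or 4 (mod 5) such that ν_p(F_{α(p)}) = 1. Then for every integer n ≥ 0, ν_p(F_{p(n+1)}) = ν_p(F_{n+1}) + ν_p(F_{pn+1}). -/

import Mathlib

/-- The restricted period (rank of apparition) of the Fibonacci sequence modulo `p`:
the least positive `n` such that `p ∣ F n`. -/
noncomputable def fibAlpha (p : ℕ) : ℕ := sInf {n | 0 < n ∧ p ∣ Nat.fib n}

section Aux

/-- Key polynomial identity for Fibonacci numbers in a commutative ring where
`fib m ^ 3 = 0`. -/
lemma fib_mul_key {R : Type} [CommRing R] (m : ℕ) (hm : 1 ≤ m)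
    (h3 : (Nat.fib m : R) ^ 3 = 0) (k : ℕ) :
    (Nat.fib (k * m) : R) * (Nat.fib (m + 1) : R) ^ 2
        = (k : R) * (Nat.fib (m + 1) : R) ^ (k + 1) * (Nat.fib m : R)
          - (k.choose 2 : R) * (Nat.fib (m + 1) : R) ^ k * (Nat.fib m : R) ^ 2
      ∧ (Nat.fib (k * m + 1) : R) * (Nat.fib (m + 1) : R) ^ 2
        = (Nat.fib (m + 1) : R) ^ (k + 2)
          + (k.choose 2 : R) * (Nat.fib (m + 1) : R) ^ k * (Nat.fib m : R) ^ 2 := by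
  induction k with
  | zero => simp
  | succ k ih =>
    obtain ⟨ih1, ih2⟩ := ih
    have hm1 : m - 1 + 1 = m := Nat.succ_pred_eq_of_pos hm
    have e1 : (k + 1) * m = k * m + (m - 1) + 1 := by
      have : (k + 1) * m = k * m + m := by ring
      omega
    have hfib1 : Nat.fib ((k + 1) * m)
        = Nat.fib (k * m) * Nat.fib (m - 1) + Nat.fib (k * m + 1) * Nat.fib m := by
      rw [e1, Nat.fib_add, hm1]
    have hfib2 : Nat.fib ((k + 1) * m + 1)
        = Nat.fib (k * m) * Nat.fib m + Nat.fib (k * m + 1) * Nat.fib (m + 1) := by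
      have : (k + 1) * m + 1 = k * m + m + 1 := by ring
      rw [this, Nat.fib_add]
    have hfm : (Nat.fib (m - 1) : R) = (Nat.fib (m + 1) : R) - Nat.fib m := by
      have h := Nat.fib_add_two (n := m - 1)
      rw [hm1] at h
      have h' : m - 1 + 2 = m + 1 := by omega
      rw [h'] at h
      rw [h]
      push_cast
      ring
    have hc : ((k + 1).choose 2) = k.choose 2 + k := by
      rw [Nat.choose_succ_succ, Nat.choose_one_right, Nat.add_comm]
    constructor
    · rw [hfib1, hc]
      push_cast [hfm]
      linear_combination ((Nat.fib (m+1) : R) - Nat.fib m) * ih1 + (Nat.fib m : R) * ih2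
        + 2 * (k.choose 2 : R) * (Nat.fib (m+1) : R) ^ k * h3
    · rw [hfib2, hc]
      push_cast
      linear_combination (Nat.fib m : R) * ih1 + (Nat.fib (m+1) : R) * ih2
        - (k.choose 2 : R) * (Nat.fib (m+1) : R) ^ k * h3

lemma five_isSquare (p : ℕ) (hp : p.Prime) (h : p % 5 = 1 ∨ p % 5 = 4) :
    IsSquare (5 : ZMod p) := by
  haveI : Fact (Nat.Prime 5) := ⟨by norm_num⟩
  haveI : Fact p.Prime := ⟨hp⟩
  have hp2 : p ≠ 2 := by rintro rfl; omega
  have key := ZMod.exists_sq_eq_prime_iff_of_mod_four_eq_one (p := 5) (q := p)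
    (by norm_num) hp2
  have : IsSquare ((5 : ℕ) : ZMod p) := by
    rw [← key]
    have hcast : ((p : ℕ) : ZMod 5) = ((p % 5 : ℕ) : ZMod 5) := (ZMod.natCast_mod p 5).symm
    rcases h with h | h <;> rw [hcast, h]
    · exact ⟨1, by norm_num⟩
    · exact ⟨2, by norm_num⟩
  simpa using this

lemma prime_dvd_fib_pred (p : ℕ) (hp : p.Prime) (h : p % 5 = 1 ∨ p % 5 = 4) :
    p ∣ Nat.fib (p - 1) := by
  haveI : Fact p.Prime := ⟨hp⟩
  have hp2 : p ≠ 2 := by rintro rfl; omega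
  have hp5 : p ≠ 5 := by rintro rfl; omega
  obtain ⟨s, hs⟩ := five_isSquare p hp h
  have h2 : (2 : ZMod p) ≠ 0 := by
    have : ((2 : ℕ) : ZMod p) ≠ 0 := by
      rw [Ne, ZMod.natCast_eq_zero_iff]
      exact fun hd => hp2 ((Nat.prime_dvd_prime_iff_eq hp Nat.prime_two).mp hd)
    simpa using this
  have h5 : (5 : ZMod p) ≠ 0 := by
    have : ((5 : ℕ) : ZMod p) ≠ 0 := by
      rw [Ne, ZMod.natCast_eq_zero_iff]
      exact fun hd => hp5 ((Nat.prime_dvd_prime_iff_eq hp (by norm_num)).mp hd)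
    simpa using this
  have hs0 : s ≠ 0 := by rintro rfl; rw [mul_zero] at hs; exact h5 hs
  set a : ZMod p := (1 + s) * (2 : ZMod p)⁻¹ with ha
  set b : ZMod p := (1 - s) * (2 : ZMod p)⁻¹ with hb
  have h2inv : (2 : ZMod p) * (2 : ZMod p)⁻¹ = 1 := mul_inv_cancel₀ h2
  have hab : a * b = -1 := by
    rw [ha, hb]
    linear_combination (2:ZMod p)⁻¹^2 * hs - (2*(2:ZMod p)⁻¹+1) * h2inv
  have haa : a * a = a + 1 := by
    rw [ha]
    linear_combination (-(2:ZMod p)⁻¹^2) * hs + ((3+s)*(2:ZMod p)⁻¹+1) * h2inv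
  have hbb : b * b = b + 1 := by
    rw [hb]
    linear_combination (-(2:ZMod p)⁻¹^2) * hs + ((3-s)*(2:ZMod p)⁻¹+1) * h2inv
  have hsub : a - b = s := by
    rw [ha, hb]
    linear_combination s * h2inv
  have binet : ∀ n : ℕ, (Nat.fib n : ZMod p) * s = a ^ n - b ^ n ∧
      (Nat.fib (n + 1) : ZMod p) * s = a ^ (n + 1) - b ^ (n + 1) := by
    intro n
    induction n with
    | zero => simp [hsub]
    | succ n ih =>
      obtain ⟨ih1, ih2⟩ := ih
      refine ⟨ih2, ?_⟩
      rw [Nat.fib_add_two]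
      push_cast
      have : a ^ (n + 2) - b ^ (n + 2) = a ^ n * (a * a) - b ^ n * (b * b) := by ring
      rw [this, haa, hbb]
      linear_combination ih1 + ih2
  have ha0 : a ≠ 0 := by
    rintro h0
    rw [h0, zero_mul] at hab
    exact one_ne_zero (neg_eq_zero.mp hab.symm)
  have hb0 : b ≠ 0 := by
    rintro h0
    rw [h0, mul_zero] at hab
    exact one_ne_zero (neg_eq_zero.mp hab.symm)
  have hfermat_a : a ^ (p - 1) = 1 := ZMod.pow_card_sub_one_eq_one ha0
  have hfermat_b : b ^ (p - 1) = 1 := ZMod.pow_card_sub_one_eq_one hb0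
  have hbin := (binet (p - 1)).1
  rw [hfermat_a, hfermat_b, sub_self] at hbin
  have hfib0 : (Nat.fib (p - 1) : ZMod p) = 0 := by
    rcases mul_eq_zero.mp hbin with h' | h'
    · exact h'
    · exact absurd h' hs0
  exact (ZMod.natCast_eq_zero_iff _ _).mp hfib0

lemma padicValNat_eq_of {p a v : ℕ} [Fact p.Prime] (ha : a ≠ 0)
    (h1 : p ^ v ∣ a) (h2 : ¬ p ^ (v + 1) ∣ a) : padicValNat p a = v := by
  refine le_antisymm ?_ ((padicValNat_dvd_iff_le ha).mp h1)
  by_contra hlt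
  exact h2 ((padicValNat_dvd_iff_le ha).mpr (by omega))

/-- The "coprime" case of lifting the exponent: if `p ∥ fib α` and `p ∤ k` then
`ν_p(fib (k α)) = 1`. -/
lemma coprime_case (p : ℕ) (hp : p.Prime) (α : ℕ) (hα1 : 1 ≤ α)
    (hpa : p ∣ Nat.fib α) (hp2a : ¬ p ^ 2 ∣ Nat.fib α)
    (k : ℕ) (hk : ¬ p ∣ k) : padicValNat p (Nat.fib (k * α)) = 1 := by
  haveI : Fact p.Prime := ⟨hp⟩
  have hk0 : k ≠ 0 := by rintro rfl; exact hk (dvd_zero p)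
  have hkα : 1 ≤ k * α := Nat.one_le_iff_ne_zero.mpr (by positivity)
  have hne : Nat.fib (k * α) ≠ 0 := (Nat.fib_pos.mpr hkα).ne'
  have hdvd1 : p ∣ Nat.fib (k * α) :=
    hpa.trans (Nat.fib_dvd α (k * α) ⟨k, (mul_comm k α)⟩)
  refine padicValNat_eq_of hne (by simpa using hdvd1) ?_
  intro hdvd2
  -- work in ZMod (p ^ 2)
  have h2' : ((Nat.fib α : ZMod (p ^ 2))) ^ 2 = 0 := by
    have : ((Nat.fib α ^ 2 : ℕ) : ZMod (p ^ 2)) = 0 := by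
      rw [ZMod.natCast_eq_zero_iff]
      exact pow_dvd_pow_of_dvd hpa 2
    push_cast at this
    exact this
  have h3 : ((Nat.fib α : ZMod (p ^ 2))) ^ 3 = 0 := by
    have he : (Nat.fib α : ZMod (p^2)) ^ 3
        = (Nat.fib α : ZMod (p^2)) ^ 2 * (Nat.fib α : ZMod (p^2)) := by ring
    rw [he, h2', zero_mul]
  have key := (fib_mul_key (R := ZMod (p ^ 2)) α hα1 h3 k).1
  have hfz : ((Nat.fib (k * α) : ZMod (p ^ 2))) = 0 := by
    rw [ZMod.natCast_eq_zero_iff]; exact hdvd2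
  rw [hfz, h2'] at key
  have key2 : ((k : ZMod (p ^ 2)) * (Nat.fib (α + 1) : ZMod (p ^ 2)) ^ (k + 1))
      * (Nat.fib α : ZMod (p ^ 2)) = 0 := by linear_combination -key
  have hndc : ¬ p ∣ Nat.fib (α + 1) := by
    intro hd
    have := Nat.dvd_gcd hpa hd
    rw [Nat.Coprime.gcd_eq_one (Nat.fib_coprime_fib_succ α)] at this
    exact hp.one_lt.ne' (Nat.dvd_one.mp this)
  have hcu : IsUnit ((Nat.fib (α + 1) : ZMod (p ^ 2))) := by
    rw [ZMod.isUnit_iff_coprime]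
    exact (Nat.Coprime.pow_right 2
      (((Nat.Prime.coprime_iff_not_dvd hp).mpr hndc).symm))
  have hku : IsUnit ((k : ℕ) : ZMod (p ^ 2)) := by
    rw [ZMod.isUnit_iff_coprime]
    exact (Nat.Coprime.pow_right 2
      (((Nat.Prime.coprime_iff_not_dvd hp).mpr hk).symm))
  have haz : ((Nat.fib α : ZMod (p ^ 2))) = 0 := by
    have hu : IsUnit ((k : ZMod (p ^ 2)) * (Nat.fib (α + 1) : ZMod (p ^ 2)) ^ (k + 1)) :=
      hku.mul (hcu.pow _)
    exact (hu.mul_right_eq_zero).mp key2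
  rw [ZMod.natCast_eq_zero_iff] at haz
  exact hp2a haz

/-- The `p`-step of lifting the exponent for Fibonacci numbers. -/
lemma p_step (p : ℕ) (hp : p.Prime) (hp2 : p ≠ 2) (m : ℕ) (hm : 1 ≤ m)
    (hpm : p ∣ Nat.fib m) :
    padicValNat p (Nat.fib (p * m)) = padicValNat p (Nat.fib m) + 1 := by
  haveI : Fact p.Prime := ⟨hp⟩
  have hfm0 : Nat.fib m ≠ 0 := (Nat.fib_pos.mpr hm).ne'
  set v := padicValNat p (Nat.fib m) with hv
  have hv1 : 1 ≤ v := one_le_padicValNat_of_dvd hfm0 hpm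
  have hvd : p ^ v ∣ Nat.fib m := pow_padicValNat_dvd
  have hvnd : ¬ p ^ (v + 1) ∣ Nat.fib m := pow_succ_padicValNat_not_dvd hfm0
  have hpm1 : 1 ≤ p * m := Nat.one_le_iff_ne_zero.mpr (Nat.mul_ne_zero hp.pos.ne' (by omega))
  have hfpm0 : Nat.fib (p * m) ≠ 0 := (Nat.fib_pos.mpr hpm1).ne'
  have hndc : ¬ p ∣ Nat.fib (m + 1) := by
    intro hd
    have := Nat.dvd_gcd hpm hd
    rw [Nat.Coprime.gcd_eq_one (Nat.fib_coprime_fib_succ m)] at this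
    exact hp.one_lt.ne' (Nat.dvd_one.mp this)
  have hcop : Nat.Coprime p (Nat.fib (m + 1)) :=
    (Nat.Prime.coprime_iff_not_dvd hp).mpr hndc
  -- χ = choose p 2 is divisible by p
  have hpodd : 2 < p := lt_of_le_of_ne hp.two_le (Ne.symm hp2)
  obtain ⟨w, hw⟩ : p ∣ Nat.choose p 2 :=
    Nat.Prime.dvd_choose_self hp (by norm_num) hpodd
  -- work in ZMod (p ^ (v + 2))
  have h3 : ((Nat.fib m : ZMod (p ^ (v + 2)))) ^ 3 = 0 := by
    have hd : (p : ℕ) ^ (v + 2) ∣ Nat.fib m ^ 3 := by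
      calc p ^ (v + 2) ∣ p ^ (v * 3) := pow_dvd_pow p (by omega)
        _ = (p ^ v) ^ 3 := by rw [pow_mul]
        _ ∣ (Nat.fib m) ^ 3 := pow_dvd_pow_of_dvd hvd 3
    have : ((Nat.fib m ^ 3 : ℕ) : ZMod (p ^ (v + 2))) = 0 := by
      rw [ZMod.natCast_eq_zero_iff]; exact hd
    push_cast at this
    exact this
  have key := (fib_mul_key (R := ZMod (p ^ (v + 2))) m hm h3 p).1
  -- lift to an integer identity
  set X : ℤ := ((Nat.fib (p * m) * Nat.fib (m + 1) ^ 2 : ℕ) : ℤ) with hX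
  set T1 : ℤ := (p : ℤ) * (Nat.fib (m + 1) : ℤ) ^ (p + 1) * (Nat.fib m : ℤ) with hT1
  set T2 : ℤ := (Nat.choose p 2 : ℤ) * (Nat.fib (m + 1) : ℤ) ^ p * (Nat.fib m : ℤ) ^ 2
    with hT2
  have hcastkey : ((X : ℤ) : ZMod (p ^ (v + 2))) = ((T1 - T2 : ℤ) : ZMod (p ^ (v + 2))) := by
    rw [hX, hT1, hT2]
    push_cast
    linear_combination key
  have hmod : X ≡ T1 - T2 [ZMOD ((p ^ (v + 2) : ℕ) : ℤ)] := by
    have := (ZMod.intCast_eq_intCast_iff _ _ _).mp hcastkey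
    exact_mod_cast this
  have hdv : ((p : ℤ) ^ (v + 2)) ∣ X - (T1 - T2) := by
    have h1 := Int.ModEq.dvd hmod
    rw [show (((p ^ (v + 2) : ℕ) : ℤ)) = (p : ℤ) ^ (v + 2) by push_cast; ring] at h1
    exact dvd_sub_comm.mp h1
  obtain ⟨t, ht⟩ := hdv
  have hvdZ : ((p : ℤ) ^ v) ∣ (Nat.fib m : ℤ) := by exact_mod_cast hvd
  obtain ⟨u, hu⟩ := hvdZ
  -- divisibility facts about the two terms
  have hterm1 : ((p : ℤ) ^ (v + 1)) ∣ T1 :=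
    ⟨(Nat.fib (m + 1) : ℤ) ^ (p + 1) * u, by rw [hT1, hu]; ring⟩
  have hterm2 : ((p : ℤ) ^ (v + 2)) ∣ T2 := by
    have hwz : (Nat.choose p 2 : ℤ) = (p : ℤ) * w := by exact_mod_cast hw
    refine ⟨(w : ℤ) * (Nat.fib (m + 1) : ℤ) ^ p * u ^ 2 * (p : ℤ) ^ (v - 1), ?_⟩
    have hpows : ((p : ℤ) ^ v) ^ 2 * (p : ℤ) = (p : ℤ) ^ (v + 2) * (p : ℤ) ^ (v - 1) := by
      rw [← pow_mul, ← pow_succ, ← pow_add]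
      congr 1
      omega
    calc T2 = ((p : ℤ) ^ v) ^ 2 * (p : ℤ) * ((w : ℤ) * (Nat.fib (m + 1) : ℤ) ^ p * u ^ 2) := by
          rw [hT2, hu, hwz]; ring
      _ = (p : ℤ) ^ (v + 2) * ((w : ℤ) * (Nat.fib (m + 1) : ℤ) ^ p * u ^ 2 * (p : ℤ) ^ (v - 1)) := by
          rw [hpows]; ring
  -- (i) p ^ (v+1) divides fib (p m)
  have hi : p ^ (v + 1) ∣ Nat.fib (p * m) := by
    have hXeq : X = (p : ℤ) ^ (v + 2) * t + (T1 - T2) := by linarith [ht]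
    have hdvdZ : ((p : ℤ) ^ (v + 1)) ∣ X := by
      rw [hXeq]
      refine dvd_add (dvd_mul_of_dvd_left (pow_dvd_pow _ (by omega)) t) ?_
      exact dvd_sub hterm1 ((pow_dvd_pow _ (by omega)).trans hterm2)
    have hdvdN : p ^ (v + 1) ∣ Nat.fib (p * m) * Nat.fib (m + 1) ^ 2 := by
      rw [hX] at hdvdZ
      exact_mod_cast hdvdZ
    exact Nat.Coprime.dvd_of_dvd_mul_right ((Nat.Coprime.pow _ _ hcop)) hdvdN
  -- (ii) p ^ (v+2) does not divide fib (p m)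
  have hii : ¬ p ^ (v + 2) ∣ Nat.fib (p * m) := by
    intro hdvd
    have hXZ : ((p : ℤ) ^ (v + 2)) ∣ X := by
      rw [hX]
      have : p ^ (v + 2) ∣ Nat.fib (p * m) * Nat.fib (m + 1) ^ 2 :=
        dvd_mul_of_dvd_left hdvd _
      exact_mod_cast this
    have hE1 : ((p : ℤ) ^ (v + 2)) ∣ T1 := by
      have h1 : ((p : ℤ) ^ (v + 2)) ∣ X - (T1 - T2) := ⟨t, ht⟩
      have h2 : T1 = X - (X - (T1 - T2)) + T2 := by ring
      rw [h2]
      exact dvd_add (dvd_sub hXZ h1) hterm2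
    have hEN : p ^ (v + 2) ∣ p * (Nat.fib (m + 1) ^ (p + 1) * Nat.fib m) := by
      have : ((p : ℤ) ^ (v + 2)) ∣
          ((p * (Nat.fib (m + 1) ^ (p + 1) * Nat.fib m) : ℕ) : ℤ) := by
        push_cast
        convert hE1 using 1
        rw [hT1]; ring
      exact_mod_cast this
    have hEN' : p ^ (v + 1) ∣ Nat.fib (m + 1) ^ (p + 1) * Nat.fib m := by
      have hp0 : 0 < p := hp.pos
      exact (Nat.mul_dvd_mul_iff_left hp0).mp
        (by rwa [show p ^ (v + 2) = p * p ^ (v + 1) by rw [pow_succ]; ring] at hEN)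
    have : p ^ (v + 1) ∣ Nat.fib m :=
      Nat.Coprime.dvd_of_dvd_mul_left ((Nat.Coprime.pow _ _ hcop)) hEN'
    exact hvnd this
  exact padicValNat_eq_of hfpm0 hi hii

end Aux

theorem nup_fib_p_mul_succ (p : ℕ) (hp : p.Prime) (h : p % 5 = 1 ∨ p % 5 = 4)
    (hwall : padicValNat p (Nat.fib (fibAlpha p)) = 1) (n : ℕ) :
    padicValNat p (Nat.fib (p * (n + 1))) =
      padicValNat p (Nat.fib (n + 1)) + padicValNat p (Nat.fib (p * n + 1)) := by
  haveI : Fact p.Prime := ⟨hp⟩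
  have hp2 : p ≠ 2 := by rintro rfl; omega
  have hp3 : 3 ≤ p := lt_of_le_of_ne hp.two_le (Ne.symm hp2)
  have hpf : p ∣ Nat.fib (p - 1) := prime_dvd_fib_pred p hp h
  set S : Set ℕ := {n | 0 < n ∧ p ∣ Nat.fib n} with hS
  have hmem : (p - 1) ∈ S := ⟨by omega, hpf⟩
  have hSne : S.Nonempty := ⟨p - 1, hmem⟩
  have hαmem : fibAlpha p ∈ S := Nat.sInf_mem hSne
  set α := fibAlpha p with hαdef
  obtain ⟨hα0, hαfib⟩ := hαmem
  have hα1 : 1 ≤ α := hα0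
  -- rank of apparition divides
  have rank_dvd : ∀ j : ℕ, p ∣ Nat.fib j → α ∣ j := by
    intro j hj
    rcases Nat.eq_zero_or_pos j with rfl | hj0
    · exact dvd_zero α
    · have hg : p ∣ Nat.fib (Nat.gcd j α) := by
        rw [Nat.fib_gcd]
        exact Nat.dvd_gcd hj hαfib
      have hg0 : 0 < Nat.gcd j α := Nat.gcd_pos_of_pos_left α hj0
      have hle : α ≤ Nat.gcd j α := Nat.sInf_le ⟨hg0, hg⟩
      have hge : Nat.gcd j α ≤ α := Nat.le_of_dvd hα0 (Nat.gcd_dvd_right j α)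
      have heq : Nat.gcd j α = α := le_antisymm hge hle
      rw [← heq]
      exact Nat.gcd_dvd_left j α
  have dvd_iff : ∀ j : ℕ, p ∣ Nat.fib j ↔ α ∣ j := by
    intro j
    refine ⟨rank_dvd j, fun hd => hαfib.trans (Nat.fib_dvd α j hd)⟩
  have hαp1 : α ∣ p - 1 := rank_dvd (p - 1) hpf
  have hαltp : α < p := lt_of_le_of_lt (Nat.le_of_dvd (by omega) hαp1) (by omega)
  -- p does not divide fib α twice
  have hαne : Nat.fib α ≠ 0 := (Nat.fib_pos.mpr hα1).ne'
  have hp2a : ¬ p ^ 2 ∣ Nat.fib α := by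
    have := pow_succ_padicValNat_not_dvd (p := p) (n := Nat.fib α) hαne
    rwa [hwall] at this
  -- key arithmetic: p*n+1 = (n+1) + (p-1)*n
  have harith : p * n + 1 = (n + 1) + (p - 1) * n := by
    have h1 : (p - 1) * n = p * n - n := by
      rw [Nat.sub_mul, one_mul]
    have h2 : n ≤ p * n := Nat.le_mul_of_pos_left n hp.pos
    omega
  by_cases hc : α ∣ (n + 1)
  · -- main case
    have hαdvu : α ∣ (p - 1) * n := Dvd.dvd.mul_right hαp1 n
    have hαpn1 : α ∣ p * n + 1 := by
      rw [harith]
      exact Nat.dvd_add hc hαdvu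
    obtain ⟨k, hk⟩ := hαpn1
    have hpndvd : ¬ p ∣ p * n + 1 := by
      intro hd
      have : p ∣ 1 := (Nat.dvd_add_right ⟨n, rfl⟩).mp hd
      exact hp.one_lt.ne' (Nat.dvd_one.mp this)
    have hpk : ¬ p ∣ k := by
      intro hd
      exact hpndvd (hk ▸ Dvd.dvd.mul_left hd α)
    have hcop_res : padicValNat p (Nat.fib (p * n + 1)) = 1 := by
      rw [hk, mul_comm α k]
      exact coprime_case p hp α hα1 hαfib hp2a k hpk
    have hpd : p ∣ Nat.fib (n + 1) := (dvd_iff (n + 1)).mpr hc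
    have hstep := p_step p hp hp2 (n + 1) (by omega) hpd
    rw [hstep, hcop_res]
  · -- trivial case: all valuations are zero
    have h1 : ¬ p ∣ Nat.fib (n + 1) := fun hd => hc ((dvd_iff (n + 1)).mp hd)
    have hpα : ¬ p ∣ α := fun hd => absurd (Nat.le_of_dvd hα0 hd) (not_le.mpr hαltp)
    have hcopα : Nat.Coprime α p := Nat.Coprime.symm ((Nat.Prime.coprime_iff_not_dvd hp).mpr hpα)
    have h2 : ¬ p ∣ Nat.fib (p * (n + 1)) := by
      intro hd
      have hdα : α ∣ p * (n + 1) := (dvd_iff _).mp hd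
      exact hc (hcopα.dvd_of_dvd_mul_left hdα)
    have h3 : ¬ p ∣ Nat.fib (p * n + 1) := by
      intro hd
      have hdα : α ∣ p * n + 1 := (dvd_iff _).mp hd
      have hαdvu : α ∣ (p - 1) * n := Dvd.dvd.mul_right hαp1 n
      rw [harith] at hdα
      have : α ∣ n + 1 := (Nat.dvd_add_iff_left hαdvu).mpr hdα
      exact hc this
    rw [padicValNat.eq_zero_of_not_dvd h1, padicValNat.eq_zero_of_not_dvd h2,
      padicValNat.eq_zero_of_not_dvd h3]
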